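/- Let Φ = ⋃_{j∈[m−r]} φ_j × {j} ⊆ [m]×[m−r] be an (r,m)-SLMF, let V be an r-dimensional subspace of R^m, and suppose B ∈ R^{m×(m−r)} is a matrix supported on Φ whose columns all lie in V^⊥ and which has rank m−r. If x ∈ R^m satisfies: for every j ∈ [m−r], π_{φ_j}(x) ∈ π_{φ_j}(V), and additionally for every j the j-th column of B restricted to φ_j is a normal vector of the hyperplane π_{φ_j}(V) ⊆ R^{φ_j}, then x ∈ V. -/

import Mathlib

open Matrix Finset

/-- Coordinate projection onto the coordinates indexed by `ψ`. -/
noncomputable def proj {m : ℕ} (ψ : Finset (Fin m)) :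
    ((Fin m) → ℝ) →ₗ[ℝ] ({i // i ∈ ψ} → ℝ) :=
  LinearMap.funLeft ℝ ℝ Subtype.val

/-- `B` is a basis matrix of `V`: its columns are linearly independent and span `V`. -/
def IsBasisMatrixOf {m r : ℕ} (B : Matrix (Fin m) (Fin r) ℝ)
    (V : Submodule ℝ (Fin m → ℝ)) : Prop :=
  LinearIndependent ℝ (fun j : Fin r => fun i : Fin m => B i j) ∧
    Submodule.span ℝ (Set.range (fun j : Fin r => fun i : Fin m => B i j)) = V

/-- Plücker coordinate: the `k×k` minor of `B` with rows indexed by `ψ`. -/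
noncomputable def pluck {m k : ℕ} (B : Matrix (Fin m) (Fin k) ℝ)
    (ψ : Finset (Fin m)) (h : ψ.card = k) : ℝ :=
  (B.submatrix (fun i : Fin k => ((ψ.orderIsoOfFin h i : Fin m))) id).det


/-- Standard dot product on `ℝ^m`. -/
def dot {m : ℕ} (x y : Fin m → ℝ) : ℝ := ∑ i, x i * y i

theorem stmt10 {m r : ℕ} (hr : r ≤ m)
    (φ : Fin (m - r) → Finset (Fin m)) (hφ : ∀ j, (φ j).card = r + 1)
    (hSLMF : ∀ T : Finset (Fin (m - r)), T.Nonempty → T.card + r ≤ (T.biUnion φ).card)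
    (V : Submodule ℝ (Fin m → ℝ)) (hV : Module.finrank ℝ V = r)
    (B : Matrix (Fin m) (Fin (m - r)) ℝ)
    (hsupp : ∀ i j, i ∉ φ j → B i j = 0)
    (hperp : ∀ j : Fin (m - r), ∀ v ∈ V, dot (fun i => B i j) v = 0)
    (hrank : B.rank = m - r)
    (x : Fin m → ℝ)
    (hx : ∀ j : Fin (m - r), proj (φ j) x ∈ V.map (proj (φ j)))
    -- for every j, the j-th column of B restricted to φ j is a (nonzero) normal
    -- vector of the hyperplane π_{φ j}(V) ⊆ ℝ^{φ j} :
    (hhyp : ∀ j : Fin (m - r), Module.finrank ℝ (V.map (proj (φ j))) = r)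
    (hnormal : ∀ j : Fin (m - r),
      (fun i : {i // i ∈ φ j} => B (i : Fin m) j) ≠ 0 ∧
      ∀ v ∈ V, ∑ i ∈ φ j, B i j * v i = 0) :
    x ∈ V := by
  classical
  -- transfer everything to EuclideanSpace to use orthogonality
  let e : (Fin m → ℝ) ≃ₗ[ℝ] EuclideanSpace ℝ (Fin m) :=
    (WithLp.linearEquiv 2 ℝ (Fin m → ℝ)).symm
  set W : Submodule ℝ (EuclideanSpace ℝ (Fin m)) := V.map (e : (Fin m → ℝ) →ₗ[ℝ] _) with hW
  have hWrank : Module.finrank ℝ W = r := by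
    rw [hW, LinearEquiv.finrank_map_eq]; exact hV
  -- the columns of B
  let c : Fin (m - r) → EuclideanSpace ℝ (Fin m) := fun j => e (Bᵀ j)
  have hinner : ∀ (u : Fin m → ℝ) (j : Fin (m - r)),
      (inner ℝ (c j) (e u) : ℝ) = dot (fun i => B i j) u := by
    intro u j
    simp only [PiLp.inner_apply, RCLike.inner_apply, conj_trivial, dot]
    exact Finset.sum_congr rfl (fun i _ => mul_comm _ _)
  set S : Submodule ℝ (EuclideanSpace ℝ (Fin m)) := Submodule.span ℝ (Set.range c) with hS
  -- S ≤ Wᗮ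
  have hSW : S ≤ Wᗮ := by
    rw [hS, Submodule.span_le]
    rintro _ ⟨j, rfl⟩
    rw [SetLike.mem_coe, Submodule.mem_orthogonal']
    rintro _ ⟨v, hv, rfl⟩
    exact (hinner v j).trans (hperp j v hv)
  -- finrank S = m - r
  have hSrank : Module.finrank ℝ S = m - r := by
    have h1 : S = (Submodule.span ℝ (Set.range B.col)).map (e : (Fin m → ℝ) →ₗ[ℝ] _) := by
      rw [hS, Submodule.map_span]
      congr 1
      rw [← Set.range_comp]
      rfl
    rw [h1, LinearEquiv.finrank_map_eq, ← Matrix.rank_eq_finrank_span_cols, hrank]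
  -- finrank Wᗮ = m - r
  have hWorth : Module.finrank ℝ Wᗮ = m - r := by
    have := Submodule.finrank_add_finrank_orthogonal W
    rw [hWrank, finrank_euclideanSpace_fin] at this
    omega
  -- S = Wᗮ
  have hSeq : S = Wᗮ :=
    Submodule.eq_of_le_of_finrank_eq hSW (by rw [hSrank, hWorth])
  -- e x is orthogonal to every column of B
  have hbx : ∀ j : Fin (m - r), (inner ℝ (c j) (e x) : ℝ) = 0 := by
    intro j
    rw [hinner x j]
    obtain ⟨v, hvV, hvx⟩ := hx j
    have hagree : ∀ i ∈ φ j, v i = x i := by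
      intro i hi
      exact congrFun hvx ⟨i, hi⟩
    have h1 : dot (fun i => B i j) x = ∑ i ∈ φ j, B i j * x i := by
      rw [dot]
      exact (Finset.sum_subset (Finset.subset_univ _)
        (fun i _ hi => by rw [hsupp i j hi, zero_mul])).symm
    rw [h1]
    rw [Finset.sum_congr rfl (fun i hi => by rw [← hagree i hi])]
    exact (hnormal j).2 v hvV
  -- hence e x ∈ Sᗮ = Wᗮᗮ = W
  have hexS : e x ∈ Sᗮ := by
    rw [hS]
    intro u hu
    induction hu using Submodule.span_induction with
    | mem u hu => obtain ⟨j, rfl⟩ := hu; exact hbx j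
    | zero => simp
    | add u v _ _ hu hv => rw [inner_add_left, hu, hv, add_zero]
    | smul a u _ hu => rw [inner_smul_left, hu, mul_zero]
  rw [hSeq, Submodule.orthogonal_orthogonal] at hexS
  rw [hW] at hexS
  obtain ⟨v, hvV, hvx⟩ := hexS
  have : v = x := e.injective hvx
  rwa [this] at hvV
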